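/- arXiv:1407.5567 — 2 statements merged into one kernel-verified Lean document; each statement's English description precedes it below -/
import Mathlib

section
/- For every natural number n ≥ 1 and every s > 0 real, the integral ∫₀^∞ |μ(t)| · t^{s-1} · |log t|^n dt is finite, where μ(t) = -(2+t)·e^{t}/(e^{t}-1)^2 + 2t·e^{2t}/(e^{t}-1)^3. -/
open Real MeasureTheory Set

lemma aux_f_small {t : ℝ} (h0 : 0 ≤ t) (h1 : t ≤ 1) :
    |t * Real.exp t - 2 * Real.exp t + t + 2| ≤ t ^ 3 * Real.exp t := by
  have hb := Real.exp_bound (x := -t) (by rwa [abs_neg, abs_of_nonneg h0]) (n := 4) (by norm_num)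
  rw [abs_neg, abs_of_nonneg h0] at hb
  simp [Finset.sum_range_succ, Nat.factorial] at hb
  have h2 := abs_le.1 hb
  have hl := h2.1
  have hr := h2.2
  have ht4 : t ^ 4 ≤ t ^ 3 := pow_le_pow_of_le_one h0 h1 (by norm_num)
  have ht2 : (0:ℝ) ≤ t + 2 := by linarith
  have hkey : |t - 2 + (t + 2) * Real.exp (-t)| ≤ t ^ 3 := by
    rw [abs_le]
    constructor <;>
      nlinarith [mul_le_mul_of_nonneg_left hr ht2, mul_le_mul_of_nonneg_left hl ht2,
        pow_nonneg h0 3, pow_nonneg h0 4]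
  have hE : (0:ℝ) < Real.exp t := Real.exp_pos t
  have heq : t * Real.exp t - 2 * Real.exp t + t + 2
      = (t - 2 + (t + 2) * Real.exp (-t)) * Real.exp t := by
    rw [Real.exp_neg]
    field_simp
    ring
  rw [heq, abs_mul, abs_of_pos hE]
  exact mul_le_mul_of_nonneg_right hkey hE.le

lemma aux_mu_eq {t : ℝ} (ht : 0 < t) :
    -(2 + t) * Real.exp t / (Real.exp t - 1) ^ 2 + 2 * t * Real.exp (2 * t) / (Real.exp t - 1) ^ 3
      = Real.exp t * (t * Real.exp t - 2 * Real.exp t + t + 2) / (Real.exp t - 1) ^ 3 := by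
  have h1 : Real.exp t - 1 > 0 := by nlinarith [Real.add_one_le_exp t, ht]
  have h2 : Real.exp (2 * t) = Real.exp t * Real.exp t := by rw [two_mul, Real.exp_add]
  rw [h2]
  field_simp
  ring

lemma aux_mu_small {t : ℝ} (h0 : 0 < t) (h1 : t ≤ 1) :
    |(-(2 + t) * Real.exp t / (Real.exp t - 1) ^ 2
        + 2 * t * Real.exp (2 * t) / (Real.exp t - 1) ^ 3)| ≤ 9 := by
  have hE : (0:ℝ) < Real.exp t := Real.exp_pos t
  have hE1 : t ≤ Real.exp t - 1 := by nlinarith [Real.add_one_le_exp t]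
  have hEpos : (0:ℝ) < Real.exp t - 1 := lt_of_lt_of_le h0 hE1
  have hcube : t ^ 3 ≤ (Real.exp t - 1) ^ 3 := pow_le_pow_left₀ h0.le hE1 3
  have hE3 : Real.exp t ≤ 3 := by
    calc Real.exp t ≤ Real.exp 1 := Real.exp_le_exp.2 h1
    _ ≤ 3 := by nlinarith [Real.exp_one_lt_d9]
  have hf := aux_f_small h0.le h1
  rw [aux_mu_eq h0, abs_div, abs_mul, abs_of_pos hE, abs_of_pos (pow_pos hEpos 3),
    div_le_iff₀ (pow_pos hEpos 3)]
  have habs : (0:ℝ) ≤ |t * Real.exp t - 2 * Real.exp t + t + 2| := abs_nonneg _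
  nlinarith [mul_le_mul_of_nonneg_left hf hE.le, pow_nonneg h0.le 3,
    mul_le_mul_of_nonneg_left hE3 (mul_nonneg (pow_nonneg h0.le 3) hE.le)]

lemma aux_mu_large {t : ℝ} (h1 : 1 ≤ t) :
    |(-(2 + t) * Real.exp t / (Real.exp t - 1) ^ 2
        + 2 * t * Real.exp (2 * t) / (Real.exp t - 1) ^ 3)| ≤ 48 * t * Real.exp (-t) := by
  have h0 : (0:ℝ) < t := lt_of_lt_of_le one_pos h1
  have hE : (0:ℝ) < Real.exp t := Real.exp_pos t
  have hE2 : (2:ℝ) ≤ Real.exp t := by nlinarith [Real.add_one_le_exp t]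
  have hEpos : (0:ℝ) < Real.exp t - 1 := by linarith
  have hf : |t * Real.exp t - 2 * Real.exp t + t + 2| ≤ 6 * t * Real.exp t := by
    rw [abs_le]
    constructor <;> nlinarith [mul_le_mul_of_nonneg_left hE2 h0.le, hE2, h0, h1]
  have hcube : (Real.exp t / 2) ^ 3 ≤ (Real.exp t - 1) ^ 3 :=
    pow_le_pow_left₀ (by positivity) (by linarith) 3
  rw [aux_mu_eq h0, Real.exp_neg, abs_div, abs_mul, abs_of_pos hE, abs_of_pos (pow_pos hEpos 3)]
  rw [show (48:ℝ) * t * (Real.exp t)⁻¹ = 48 * t / Real.exp t by ring,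
    div_le_div_iff₀ (pow_pos hEpos 3) hE]
  have habs : (0:ℝ) ≤ |t * Real.exp t - 2 * Real.exp t + t + 2| := abs_nonneg _
  nlinarith [mul_le_mul_of_nonneg_left hf hE.le, mul_le_mul_of_nonneg_left hcube (by positivity : (0:ℝ) ≤ 48 * t)]

lemma aux_log_bound {t ε : ℝ} (h0 : 0 < t) (h1 : t ≤ 1) (hε : 0 < ε) :
    |Real.log t| ≤ (1 / ε) * t ^ (-ε) := by
  have hlog : Real.log t ≤ 0 := Real.log_nonpos h0.le h1
  rw [abs_of_nonpos hlog]
  have h2 : Real.log (t ^ (-ε)) = -ε * Real.log t := Real.log_rpow h0 _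
  have h3 : Real.log (t ^ (-ε)) ≤ t ^ (-ε) - 1 :=
    Real.log_le_sub_one_of_pos (Real.rpow_pos_of_pos h0 _)
  rw [h2] at h3
  have h4 : (0:ℝ) < t ^ (-ε) := Real.rpow_pos_of_pos h0 _
  rw [div_mul_eq_mul_div, one_mul, le_div_iff₀ hε]
  nlinarith

theorem stieltjes_stmt4 (n : ℕ) (hn : 1 ≤ n) (s : ℝ) (hs : 0 < s) :
    MeasureTheory.IntegrableOn
      (fun t : ℝ => |(-(2 + t) * Real.exp t / (Real.exp t - 1) ^ 2
          + 2 * t * Real.exp (2 * t) / (Real.exp t - 1) ^ 3)|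
        * t ^ (s - 1) * |Real.log t| ^ n)
      (Set.Ioi 0) := by
  set F : ℝ → ℝ := fun t : ℝ => |(-(2 + t) * Real.exp t / (Real.exp t - 1) ^ 2
          + 2 * t * Real.exp (2 * t) / (Real.exp t - 1) ^ 3)|
        * t ^ (s - 1) * |Real.log t| ^ n with hF
  have hne : ∀ t : ℝ, t ∈ Set.Ioi (0:ℝ) → Real.exp t - 1 ≠ 0 := fun t ht => by
    rw [Set.mem_Ioi] at ht
    nlinarith [Real.add_one_le_exp t]
  have hcont : ContinuousOn F (Set.Ioi 0) := by
    apply ContinuousOn.mul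
    apply ContinuousOn.mul
    · apply ContinuousOn.abs
      apply ContinuousOn.add
      · exact ContinuousOn.div (by fun_prop) (by fun_prop)
          (fun t ht => pow_ne_zero 2 (hne t ht))
      · exact ContinuousOn.div (by fun_prop) (by fun_prop)
          (fun t ht => pow_ne_zero 3 (hne t ht))
    · intro t ht
      exact (Real.continuousAt_rpow_const t _ (Or.inl (ne_of_gt ht))).continuousWithinAt
    · apply ContinuousOn.pow
      apply ContinuousOn.abs
      exact Real.continuousOn_log.mono (fun t ht => ne_of_gt ht)
  have hFnn : ∀ t : ℝ, 0 < t → ‖F t‖ = F t := by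
    intro t ht
    rw [Real.norm_eq_abs, abs_of_nonneg]
    have := Real.rpow_nonneg ht.le (s - 1)
    positivity
  rw [show Set.Ioi (0:ℝ) = Set.Ioc 0 1 ∪ Set.Ioi 1 from (Ioc_union_Ioi_eq_Ioi zero_le_one).symm]
  refine MeasureTheory.IntegrableOn.union ?_ ?_
  · -- part near 0
    set ε : ℝ := s / (2 * n) with hε
    have hnR : (0:ℝ) < n := by exact_mod_cast hn
    have hεpos : 0 < ε := by positivity
    have hg : IntegrableOn (fun t : ℝ => 9 * (1 / ε) ^ n * t ^ (s / 2 - 1)) (Set.Ioc 0 1) := by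
      have h := (intervalIntegrable_iff_integrableOn_Ioc_of_le
        zero_le_one).1 (intervalIntegral.intervalIntegrable_rpow' (a := 0) (b := 1)
          (r := s / 2 - 1) (by linarith))
      exact h.const_mul _
    refine (hg.mono' ((hcont.mono Ioc_subset_Ioi_self).aestronglyMeasurable measurableSet_Ioc) ?_)
    rw [ae_restrict_iff' measurableSet_Ioc]
    refine ae_of_all _ fun t ht => ?_
    obtain ⟨ht0, ht1⟩ := ht
    rw [hFnn t ht0]
    have hlog : |Real.log t| ^ n ≤ ((1 / ε) * t ^ (-ε)) ^ n :=
      pow_le_pow_left₀ (abs_nonneg _) (aux_log_bound ht0 ht1 hεpos) n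
    have hμ := aux_mu_small ht0 ht1
    have hrpow : (0:ℝ) ≤ t ^ (s - 1) := Real.rpow_nonneg ht0.le _
    calc F t ≤ 9 * t ^ (s - 1) * ((1 / ε) * t ^ (-ε)) ^ n := by
          apply mul_le_mul
          · exact mul_le_mul_of_nonneg_right hμ hrpow
          · exact hlog
          · positivity
          · positivity
      _ = 9 * (1 / ε) ^ n * t ^ (s / 2 - 1) := by
          rw [mul_pow, ← Real.rpow_natCast (t ^ (-ε)) n, ← Real.rpow_mul ht0.le,
            show -ε * n = -(s/2) by rw [hε]; field_simp [hnR.ne']]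
          rw [show (9:ℝ) * t ^ (s-1) * ((1/ε)^n * t ^ (-(s/2)))
            = 9 * (1/ε)^n * (t ^ (s-1) * t ^ (-(s/2))) by ring,
            ← Real.rpow_add ht0, show s - 1 + -(s/2) = s/2 - 1 by ring]
  · -- part near ∞
    have hr : (0:ℝ) < s + n + 1 := by positivity
    have hg : IntegrableOn (fun t : ℝ => 48 * (Real.exp (-t) * t ^ (s + n + 1 - 1)))
        (Set.Ioi 1) := by
      exact ((Real.GammaIntegral_convergent hr).mono_set
        (Ioi_subset_Ioi zero_le_one)).const_mul 48
    refine (hg.mono' ((hcont.mono (Ioi_subset_Ioi zero_le_one)).aestronglyMeasurable measurableSet_Ioi) ?_)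
    rw [ae_restrict_iff' measurableSet_Ioi]
    refine ae_of_all _ fun t ht => ?_
    rw [Set.mem_Ioi] at ht
    have ht0 : (0:ℝ) < t := lt_trans one_pos ht
    rw [hFnn t ht0]
    have hlog : |Real.log t| ^ n ≤ t ^ n := by
      apply pow_le_pow_left₀ (abs_nonneg _)
      rw [abs_of_nonneg (Real.log_nonneg ht.le)]
      linarith [Real.log_le_sub_one_of_pos ht0]
    have hμ := aux_mu_large ht.le
    have hrpow : (0:ℝ) ≤ t ^ (s - 1) := Real.rpow_nonneg ht0.le _
    calc F t ≤ (48 * t * Real.exp (-t)) * t ^ (s - 1) * t ^ n := by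
          apply mul_le_mul
          · exact mul_le_mul_of_nonneg_right hμ hrpow
          · exact hlog
          · positivity
          · positivity
      _ = 48 * (Real.exp (-t) * t ^ (s + n + 1 - 1)) := by
          rw [show s + n + 1 - 1 = 1 + (s - 1) + n by ring, Real.rpow_add ht0,
            Real.rpow_add ht0, Real.rpow_one, Real.rpow_natCast]
          ring
end

section
/- For real s > 1 and real a with 0 < a ≤ 1, (s-1)·ζ(s,a)·Γ(s) = ∫₀^∞ ψ(t)·e^{-(a-1)t}·t^{s-1} dt, where ψ(t) = t·e^{t}/(e^{t}-1)^2 - 1/(e^{t}-1) + (a-1)·t/(e^{t}-1) and ζ(s,a) = Σ_{n≥0} 1/(n+a)^s is the Hurwitz zeta function. -/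
open MeasureTheory Set

lemma st19_intOn {p c : ℝ} (hp : -1 < p) (hc : 0 < c) :
    IntegrableOn (fun t : ℝ => t ^ p * Real.exp (-(c * t))) (Set.Ioi 0) := by
  have := integrableOn_rpow_mul_exp_neg_mul_rpow hp zero_lt_one hc
  simpa [Real.rpow_one, neg_mul] using this

lemma st19_intVal {p c : ℝ} (hp : -1 < p) (hc : 0 < c) :
    ∫ t in Set.Ioi (0:ℝ), t ^ p * Real.exp (-(c * t))
      = Real.Gamma (p+1) * (1 / c ^ (p+1)) := by
  have := Real.integral_rpow_mul_exp_neg_mul_Ioi (a := p+1) (by linarith) hc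
  rw [add_sub_cancel_right] at this
  rw [this, one_div, Real.inv_rpow hc.le, ← one_div, mul_comm]


lemma st19_pointwise (s a : ℝ) {t : ℝ} (ht : 0 < t) :
    (∑' m : ℕ, (((m:ℝ)+a) * (t ^ s * Real.exp (-(((m:ℝ)+a) * t)))
        - t ^ (s-1) * Real.exp (-(((m:ℝ)+a) * t))))
      = (t * Real.exp t / (Real.exp t - 1) ^ 2 - 1 / (Real.exp t - 1)
            + (a - 1) * t / (Real.exp t - 1))
          * Real.exp (-(a - 1) * t) * t ^ (s - 1) := by
  set x := Real.exp (-t) with hxdef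
  set E := Real.exp (-(a-1) * t) with hEdef
  set u := Real.exp t with hudef
  have hx0 : 0 < x := Real.exp_pos _
  have hx1 : x < 1 := by
    rw [hxdef, ← Real.exp_zero]
    exact Real.exp_lt_exp.mpr (by linarith)
  have hu1 : 1 < u := by
    rw [hudef, ← Real.exp_zero]
    exact Real.exp_lt_exp.mpr ht
  have hxu : x = u⁻¹ := by rw [hxdef, hudef, Real.exp_neg]
  have hexp : ∀ m : ℕ, Real.exp (-(((m:ℝ)+a) * t)) = x ^ (m+1) * E := by
    intro m
    rw [hxdef, hEdef, ← Real.exp_nat_mul, ← Real.exp_add]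
    congr 1
    push_cast
    ring
  have hgeo : HasSum (fun m : ℕ => x ^ (m+1)) (x / (1-x)) := by
    have := (hasSum_geometric_of_lt_one hx0.le hx1).mul_left x
    rw [div_eq_mul_inv]
    convert this using 1
    · rfl
    funext m
    rw [pow_succ]
    ring
  have hcoe : HasSum (fun m : ℕ => ((m:ℝ)+1) * x ^ (m+1)) (x / (1-x)^2) := by
    have h := hasSum_coe_mul_geometric_of_norm_lt_one (r := x)
      (by rwa [Real.norm_eq_abs, abs_of_pos hx0])
    have h2 := (hasSum_nat_add_iff (f := fun n : ℕ => (n:ℝ) * x ^ n) 1).mpr (by simpa using h)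
    convert h2 using 1
    · rfl
    funext m
    push_cast
    ring
  have hsum : HasSum (fun m : ℕ => ((m:ℝ)+a) * x ^ (m+1))
      (x/(1-x)^2 + (a-1)*(x/(1-x))) := by
    have := hcoe.add (hgeo.mul_left (a-1))
    convert this using 1
    funext m
    ring
  have H := ((hsum.mul_left (t^s)).sub (hgeo.mul_left (t^(s-1)))).mul_right E
  have heq : (fun m : ℕ => (((m:ℝ)+a) * (t ^ s * Real.exp (-(((m:ℝ)+a) * t)))
        - t ^ (s-1) * Real.exp (-(((m:ℝ)+a) * t))))
      = fun m : ℕ => (t^s * (((m:ℝ)+a) * x ^ (m+1)) - t^(s-1) * x ^ (m+1)) * E := by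
    funext m
    rw [hexp m]
    ring
  rw [heq, H.tsum_eq]
  have hts : t ^ s = t ^ (s-1) * t := by
    rw [show s = s - 1 + 1 by ring, Real.rpow_add ht, Real.rpow_one]
    ring_nf
  rw [hts, hxu]
  have hu0 : u ≠ 0 := by positivity
  have hum : u - 1 ≠ 0 := by intro h; nlinarith
  have hix : 1 - u⁻¹ ≠ 0 := by
    have : u⁻¹ < 1 := by
      rw [← hxu]; exact hx1
    intro h
    nlinarith
  field_simp
  ring

theorem stieltjes_stmt19 (s a : ℝ) (hs : 1 < s) (ha : 0 < a) (ha1 : a ≤ 1) :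
    (s - 1) * (∑' n : ℕ, 1 / ((n : ℝ) + a) ^ s) * Real.Gamma s =
      ∫ t in Set.Ioi (0 : ℝ),
        (t * Real.exp t / (Real.exp t - 1) ^ 2 - 1 / (Real.exp t - 1)
            + (a - 1) * t / (Real.exp t - 1))
          * Real.exp (-(a - 1) * t) * t ^ (s - 1) := by
  have hs1 : (-1:ℝ) < s := by linarith
  have hs2 : (-1:ℝ) < s - 1 := by linarith
  have hs0 : (0:ℝ) < s := by linarith
  set F : ℕ → ℝ → ℝ := fun m t =>
    ((m:ℝ)+a) * (t ^ s * Real.exp (-(((m:ℝ)+a) * t)))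
      - t ^ (s-1) * Real.exp (-(((m:ℝ)+a) * t)) with hF
  have hc : ∀ m : ℕ, (0:ℝ) < (m:ℝ) + a := fun m => by positivity
  have hF_int : ∀ m : ℕ, IntegrableOn (F m) (Set.Ioi 0) :=
    fun m => (((st19_intOn hs1 (hc m)).const_mul _)).sub (st19_intOn hs2 (hc m))
  -- value of each integral
  have hGamma1 : Real.Gamma (s+1) = s * Real.Gamma s := Real.Gamma_add_one hs0.ne'
  have hval : ∀ m : ℕ, ∫ t in Set.Ioi (0:ℝ), F m t
      = (s-1) * Real.Gamma s * (1 / ((m:ℝ)+a) ^ s) := by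
    intro m
    set c := (m:ℝ) + a with hcdef
    have hc0 : 0 < c := hc m
    rw [hF]
    rw [MeasureTheory.integral_sub (((st19_intOn hs1 hc0).const_mul _))
      (st19_intOn hs2 hc0), MeasureTheory.integral_const_mul,
      st19_intVal hs1 hc0, st19_intVal hs2 hc0, sub_add_cancel, hGamma1]
    have hcs : c ^ (s+1) = c ^ s * c := by
      rw [Real.rpow_add_one hc0.ne']
    rw [hcs]
    have h1 : c ^ s ≠ 0 := by positivity
    field_simp
    ring
  -- norm bound
  have hnorm : ∀ m : ℕ, (∫ t in Set.Ioi (0:ℝ), ‖F m t‖)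
      ≤ (s+1) * Real.Gamma s * (1 / ((m:ℝ)+a) ^ s) := by
    intro m
    set c := (m:ℝ) + a with hcdef
    have hc0 : 0 < c := hc m
    have hGint : IntegrableOn (fun t : ℝ =>
        c * (t ^ s * Real.exp (-(c * t))) + t ^ (s-1) * Real.exp (-(c * t)))
        (Set.Ioi 0) := ((st19_intOn hs1 hc0).const_mul _).add (st19_intOn hs2 hc0)
    have hb : (∫ t in Set.Ioi (0:ℝ), ‖F m t‖)
        ≤ ∫ t in Set.Ioi (0:ℝ),
          (c * (t ^ s * Real.exp (-(c * t))) + t ^ (s-1) * Real.exp (-(c * t))) := by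
      refine MeasureTheory.setIntegral_mono_on (hF_int m).norm hGint measurableSet_Ioi ?_
      intro t htp
      have ht0 : 0 < t := htp
      rw [Real.norm_eq_abs]
      have h1 : 0 ≤ c * (t ^ s * Real.exp (-(c * t))) := by positivity
      have h2 : 0 ≤ t ^ (s-1) * Real.exp (-(c * t)) := by positivity
      calc |F m t| ≤ |c * (t ^ s * Real.exp (-(c * t)))|
            + |t ^ (s-1) * Real.exp (-(c * t))| := abs_sub _ _
        _ = _ := by rw [abs_of_nonneg h1, abs_of_nonneg h2]
    refine hb.trans_eq ?_
    rw [MeasureTheory.integral_add ((st19_intOn hs1 hc0).const_mul _)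
      (st19_intOn hs2 hc0), MeasureTheory.integral_const_mul,
      st19_intVal hs1 hc0, st19_intVal hs2 hc0, sub_add_cancel, hGamma1]
    have hcs : c ^ (s+1) = c ^ s * c := Real.rpow_add_one hc0.ne' s
    rw [hcs]
    have h1 : c ^ s ≠ 0 := by positivity
    field_simp
  -- summability
  have hsummand : Summable (fun m : ℕ => (s+1) * Real.Gamma s * (1 / ((m:ℝ)+a) ^ s)) := by
    have h0 := (Real.summable_one_div_nat_add_rpow a s).mpr hs
    exact (h0.congr fun n => by rw [abs_of_pos (hc n)]).mul_left _
  have hFsum : Summable (fun m : ℕ => ∫ t in Set.Ioi (0:ℝ), ‖F m t‖) :=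
    Summable.of_nonneg_of_le
      (fun m => MeasureTheory.integral_nonneg fun t => norm_nonneg _)
      hnorm hsummand
  have H := MeasureTheory.hasSum_integral_of_summable_integral_norm
    (μ := volume.restrict (Set.Ioi 0)) hF_int hFsum
  have hptw : (∫ t in Set.Ioi (0:ℝ), ∑' m : ℕ, F m t)
      = ∫ t in Set.Ioi (0 : ℝ),
        (t * Real.exp t / (Real.exp t - 1) ^ 2 - 1 / (Real.exp t - 1)
            + (a - 1) * t / (Real.exp t - 1))
          * Real.exp (-(a - 1) * t) * t ^ (s - 1) :=
    MeasureTheory.setIntegral_congr_fun measurableSet_Ioi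
      fun t ht => st19_pointwise s a ht
  rw [← hptw, ← H.tsum_eq]
  calc (s - 1) * (∑' n : ℕ, 1 / ((n : ℝ) + a) ^ s) * Real.Gamma s
      = (s - 1) * Real.Gamma s * ∑' n : ℕ, 1 / ((n : ℝ) + a) ^ s := by ring
    _ = ∑' m : ℕ, (s - 1) * Real.Gamma s * (1 / ((m:ℝ) + a) ^ s) := tsum_mul_left.symm
    _ = ∑' m : ℕ, ∫ t in Set.Ioi (0:ℝ), F m t := by
        exact tsum_congr fun m => (hval m).symm
end
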